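/- The busy beaver / maximum shift function is not computable: there is no computable function S : ℕ → ℕ such that for every code c of size ≤ n whose evaluation on 0 halts, it halts within S n steps. -/

import Mathlib

open Nat.Partrec

theorem busy_beaver_shift_function_not_computable :
    ¬ ∃ S : ℕ → ℕ, Computable S ∧
      ∀ (c : Code) (n : ℕ), Code.encodeCode c ≤ n → (Code.eval c 0).Dom →
        ∃ v, Code.evaln (S n) c 0 = some v := by
  rintro ⟨S, hS, hmain⟩
  apply ComputablePred.halting_problem 0
  rw [ComputablePred.computable_iff]
  refine ⟨fun c => (Code.evaln (S (Code.encodeCode c)) c 0).isSome, ?_, ?_⟩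
  · have h1 : Computable fun c : Code => Code.evaln (S (Code.encodeCode c)) c 0 := by
      have := Code.primrec_evaln.to_comp
      exact this.comp (((hS.comp Computable.encode).pair Computable.id).pair
        (Computable.const 0))
    exact (Primrec.option_isSome.to_comp).comp h1
  · funext c
    simp only [eq_iff_iff, Option.isSome_iff_exists]
    constructor
    · intro h
      exact hmain c (Code.encodeCode c) le_rfl h
    · rintro ⟨v, hv⟩
      have : v ∈ Code.eval c 0 := Code.evaln_sound hv
      exact Part.dom_iff_mem.mpr ⟨v, this⟩
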